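/- The torus T(n1,n2) = C_{n1} □ C_{n2} admits an interval coloring if n1·n2 is even, and does not admit an interval coloring if n1·n2 is odd (with n1, n2 ≥ 3). -/

import Mathlib

open SimpleGraph

/-- `c` is an interval `t`-coloring of `G`: edges get colors in `{1,…,t}`, every color
`1,…,t` is used, adjacent edges get distinct colors, and the set of colors of edges
incident to any vertex is an interval of integers. -/
def IsIntervalColoring {V : Type*} (G : SimpleGraph V) (t : ℕ) (c : Sym2 V → ℕ) : Prop :=
  (∀ e ∈ G.edgeSet, 1 ≤ c e ∧ c e ≤ t) ∧
  (∀ i, 1 ≤ i → i ≤ t → ∃ e ∈ G.edgeSet, c e = i) ∧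
  (∀ v w₁ w₂, G.Adj v w₁ → G.Adj v w₂ → w₁ ≠ w₂ → c s(v, w₁) ≠ c s(v, w₂)) ∧
  (∀ v i j k, (∃ w, G.Adj v w ∧ c s(v, w) = i) → (∃ w, G.Adj v w ∧ c s(v, w) = k) →
    i ≤ j → j ≤ k → ∃ w, G.Adj v w ∧ c s(v, w) = j)

/-- `G` has an interval `t`-coloring. -/
def HasIntervalColoring {V : Type*} (G : SimpleGraph V) (t : ℕ) : Prop :=
  ∃ c : Sym2 V → ℕ, IsIntervalColoring G t c

/-- `G` is interval colorable (`G ∈ 𝔑`). -/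
def IntervalColorable {V : Type*} (G : SimpleGraph V) : Prop :=
  ∃ t : ℕ, 1 ≤ t ∧ HasIntervalColoring G t

/-- `w G`: the least number of colors in an interval coloring of `G`. -/
noncomputable def wNum {V : Type*} (G : SimpleGraph V) : ℕ :=
  sInf {t | HasIntervalColoring G t}

/-- `W G`: the greatest number of colors in an interval coloring of `G`. -/
noncomputable def WNum {V : Type*} (G : SimpleGraph V) : ℕ :=
  sSup {t | HasIntervalColoring G t}

/-- `G` is `r`-regular: every vertex has exactly `r` neighbors. -/
def IsRegularGraph {V : Type*} (G : SimpleGraph V) (r : ℕ) : Prop :=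
  ∀ v : V, (G.neighborSet v).ncard = r

/-- `c` is a proper edge coloring of `G` using colors `0,…,k-1`. -/
def IsProperEdgeColoring {V : Type*} (G : SimpleGraph V) (k : ℕ) (c : Sym2 V → ℕ) : Prop :=
  (∀ e ∈ G.edgeSet, c e < k) ∧
  (∀ v w₁ w₂, G.Adj v w₁ → G.Adj v w₂ → w₁ ≠ w₂ → c s(v, w₁) ≠ c s(v, w₂))

/-- The chromatic index `χ'(G)`. -/
noncomputable def edgeChromaticNumber {V : Type*} (G : SimpleGraph V) : ℕ :=
  sInf {k | ∃ c : Sym2 V → ℕ, IsProperEdgeColoring G k c}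

/-- `G` is 1-factorable: its edge set decomposes into perfect matchings. -/
def IsOneFactorable {V : Type*} (G : SimpleGraph V) : Prop :=
  ∃ (n : ℕ) (f : Fin n → SimpleGraph.Subgraph G),
    (∀ i, (f i).IsPerfectMatching) ∧
    (∀ e ∈ G.edgeSet, ∃! i, e ∈ (f i).edgeSet)

/-- The tensor (direct) product `G × H`. -/
def tensorProd {α β : Type*} (G : SimpleGraph α) (H : SimpleGraph β) :
    SimpleGraph (α × β) where
  Adj p q := G.Adj p.1 q.1 ∧ H.Adj p.2 q.2
  symm := Std.Symm.mk <| fun p q ⟨h₁, h₂⟩ => ⟨h₁.symm, h₂.symm⟩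
  loopless := Std.Irrefl.mk <| fun p h => G.loopless.irrefl p.1 h.1

/-- The strong tensor (semistrong) product `G ⊗ H`. -/
def strongTensorProd {α β : Type*} (G : SimpleGraph α) (H : SimpleGraph β) :
    SimpleGraph (α × β) where
  Adj p q := (G.Adj p.1 q.1 ∧ H.Adj p.2 q.2) ∨ (p.2 = q.2 ∧ G.Adj p.1 q.1)
  symm := Std.Symm.mk <| fun p q h => by
    rcases h with ⟨h₁, h₂⟩ | ⟨h₁, h₂⟩
    · exact Or.inl ⟨h₁.symm, h₂.symm⟩
    · exact Or.inr ⟨h₁.symm, h₂.symm⟩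
  loopless := Std.Irrefl.mk <| fun p h => by
    rcases h with ⟨h₁, _⟩ | ⟨_, h₁⟩ <;> exact G.loopless.irrefl p.1 h₁

/-- The strong product `G ⊠ H`. -/
def strongProd {α β : Type*} (G : SimpleGraph α) (H : SimpleGraph β) :
    SimpleGraph (α × β) where
  Adj p q := (G.Adj p.1 q.1 ∧ H.Adj p.2 q.2) ∨ (p.1 = q.1 ∧ H.Adj p.2 q.2) ∨
    (p.2 = q.2 ∧ G.Adj p.1 q.1)
  symm := Std.Symm.mk <| fun p q h => by
    rcases h with ⟨h₁, h₂⟩ | ⟨h₁, h₂⟩ | ⟨h₁, h₂⟩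
    · exact Or.inl ⟨h₁.symm, h₂.symm⟩
    · exact Or.inr (Or.inl ⟨h₁.symm, h₂.symm⟩)
    · exact Or.inr (Or.inr ⟨h₁.symm, h₂.symm⟩)
  loopless := Std.Irrefl.mk <| fun p h => by
    rcases h with ⟨h₁, _⟩ | ⟨_, h₂⟩ | ⟨_, h₁⟩
    · exact G.loopless.irrefl p.1 h₁
    · exact H.loopless.irrefl p.2 h₂
    · exact G.loopless.irrefl p.1 h₁

/-- The lexicographic product (composition) `G[H]`. -/
def lexProd {α β : Type*} (G : SimpleGraph α) (H : SimpleGraph β) :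
    SimpleGraph (α × β) where
  Adj p q := G.Adj p.1 q.1 ∨ (p.1 = q.1 ∧ H.Adj p.2 q.2)
  symm := Std.Symm.mk <| fun p q h => by
    rcases h with h₁ | ⟨h₁, h₂⟩
    · exact Or.inl h₁.symm
    · exact Or.inr ⟨h₁.symm, h₂.symm⟩
  loopless := Std.Irrefl.mk <| fun p h => by
    rcases h with h₁ | ⟨_, h₂⟩
    · exact G.loopless.irrefl p.1 h₁
    · exact H.loopless.irrefl p.2 h₂


/-! ### Auxiliary machinery for `torus_interval_colorable` -/

section TorusAux

open SimpleGraph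

lemma fin_val_add_one' {m : ℕ} (i : Fin (m+3)) :
    ((i + 1 : Fin (m+3))).val = if i.val = m+2 then 0 else i.val + 1 := by
  rw [Fin.add_def]; have := i.isLt
  simp only [Fin.val_one]
  split_ifs with h
  · rw [h]; simp
  · rw [Nat.mod_eq_of_lt (by omega)]

lemma fin_val_sub_one' {m : ℕ} (i : Fin (m+3)) :
    ((i - 1 : Fin (m+3))).val = if i.val = 0 then m+2 else i.val - 1 := by
  rw [Fin.sub_def]; have := i.isLt
  simp only [Fin.val_one]
  split_ifs with h
  · rw [h]; simp [Nat.mod_eq_of_lt]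
  · have h2 : m + 3 - 1 + i.val = (m+3) + (i.val - 1) := by omega
    rw [h2, Nat.add_mod_left, Nat.mod_eq_of_lt (by omega)]

lemma fin_ne_add_one' {m : ℕ} (i : Fin (m+3)) : i ≠ i + 1 := by
  rw [Ne, Fin.ext_iff, fin_val_add_one']
  have := i.isLt; split_ifs <;> omega

lemma fin_ne_sub_one' {m : ℕ} (i : Fin (m+3)) : i ≠ i - 1 := by
  rw [Ne, Fin.ext_iff, fin_val_sub_one']
  have := i.isLt; split_ifs <;> omega

lemma fin_add_one_ne_sub_one' {m : ℕ} (i : Fin (m+3)) : i + 1 ≠ i - 1 := by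
  rw [Ne, Fin.ext_iff, fin_val_add_one', fin_val_sub_one']
  have := i.isLt; split_ifs <;> omega

lemma cycle_adj_iff' {m : ℕ} {u v : Fin (m+3)} :
    (cycleGraph (m+3)).Adj u v ↔ v = u + 1 ∨ v = u - 1 := by
  have h : (m+3) = (m+1)+2 := rfl
  rw [h] at *
  rw [cycleGraph_adj]
  constructor
  · rintro (h | h)
    · right; rw [← h]; abel
    · left; rw [← h]; abel
  · rintro (h | h)
    · right; rw [h]; abel
    · left; rw [h]; abel

lemma box_adj_iff' {m n : ℕ} {i : Fin (m+3)} {j : Fin (n+3)} {w : Fin (m+3) × Fin (n+3)} :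
    (cycleGraph (m+3) □ cycleGraph (n+3)).Adj (i, j) w ↔
      w = (i + 1, j) ∨ w = (i - 1, j) ∨ w = (i, j + 1) ∨ w = (i, j - 1) := by
  rw [boxProd_adj]
  simp only [cycle_adj_iff', Prod.ext_iff]
  constructor
  · rintro (⟨h1 | h1, h2⟩ | ⟨h1 | h1, h2⟩) <;> simp_all
  · rintro (⟨h1, h2⟩ | ⟨h1, h2⟩ | ⟨h1, h2⟩ | ⟨h1, h2⟩) <;> simp_all

def tIdx (N x y : ℕ) : ℕ := if y = x + 1 then x else if x = y + 1 then y else N - 1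
def hcol (m k : ℕ) : ℕ := if m % 2 = 1 ∧ k = m - 1 then 3 else if k % 2 = 0 then 1 else 2
def vcol (m i k : ℕ) : ℕ :=
  if k % 2 = 1 then 4
  else if m % 2 = 1 ∧ i = 0 then 2
  else if m % 2 = 1 ∧ i = m - 1 then 1
  else 3

def tcol (m n : ℕ) (u v : Fin m × Fin n) : ℕ :=
  if u.2 = v.2 then hcol m (tIdx m u.1.val v.1.val)
  else if u.1 = v.1 then vcol m u.1.val (tIdx n u.2.val v.2.val)
  else 0

lemma tIdx_comm (N x y : ℕ) : tIdx N x y = tIdx N y x := by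
  unfold tIdx; split_ifs <;> omega

lemma tcol_comm (m n : ℕ) (u v : Fin m × Fin n) : tcol m n u v = tcol m n v u := by
  unfold tcol
  by_cases h2 : u.2 = v.2
  · rw [if_pos h2, if_pos h2.symm, tIdx_comm]
  · rw [if_neg h2, if_neg (Ne.symm h2)]
    by_cases h1 : u.1 = v.1
    · rw [if_pos h1, if_pos h1.symm, tIdx_comm, h1]
    · rw [if_neg h1, if_neg (Ne.symm h1)]

def tc (m n : ℕ) : Sym2 (Fin m × Fin n) → ℕ :=
  Sym2.lift ⟨fun u v => tcol m n u v, tcol_comm m n⟩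

lemma tc_mk (m n : ℕ) (u v : Fin m × Fin n) : tc m n s(u, v) = tcol m n u v := by
  simp [tc]

lemma tIdx_add_one {m : ℕ} (i : Fin (m+3)) :
    tIdx (m+3) i.val ((i+1 : Fin (m+3))).val = i.val := by
  have := i.isLt
  rw [fin_val_add_one']; unfold tIdx; split_ifs <;> omega

lemma tIdx_sub_one {m : ℕ} (i : Fin (m+3)) :
    tIdx (m+3) i.val ((i-1 : Fin (m+3))).val = ((i-1 : Fin (m+3))).val := by
  have := i.isLt
  rw [fin_val_sub_one']
  unfold tIdx; split_ifs <;> omega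

variable {m n : ℕ}

lemma col_R (i : Fin (m+3)) (j : Fin (n+3)) :
    tc (m+3) (n+3) s((i,j),(i+1,j)) = hcol (m+3) i.val := by
  rw [tc_mk]; unfold tcol
  rw [if_pos rfl, tIdx_add_one]

lemma col_L (i : Fin (m+3)) (j : Fin (n+3)) :
    tc (m+3) (n+3) s((i,j),(i-1,j)) = hcol (m+3) ((i-1 : Fin (m+3))).val := by
  rw [tc_mk]; unfold tcol
  rw [if_pos rfl, tIdx_sub_one]

lemma col_U (i : Fin (m+3)) (j : Fin (n+3)) :
    tc (m+3) (n+3) s((i,j),(i,j+1)) = vcol (m+3) i.val j.val := by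
  rw [tc_mk]; unfold tcol
  rw [if_neg (fin_ne_add_one' j), if_pos rfl, tIdx_add_one]

lemma col_D (i : Fin (m+3)) (j : Fin (n+3)) :
    tc (m+3) (n+3) s((i,j),(i,j-1)) = vcol (m+3) i.val ((j-1 : Fin (n+3))).val := by
  rw [tc_mk]; unfold tcol
  rw [if_neg (fin_ne_sub_one' j), if_pos rfl, tIdx_sub_one]

lemma key_arith (m n : ℕ) (hne : n % 2 = 0)
    (iv i'v jv j'v : ℕ) (hi : iv < m) (hm : 3 ≤ m) (hn : 3 ≤ n) (hj : jv < n)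
    (hi' : (iv = 0 ∧ i'v = m - 1) ∨ i'v + 1 = iv)
    (hj' : (jv = 0 ∧ j'v = n - 1) ∨ j'v + 1 = jv) :
    (1 ≤ hcol m iv ∧ hcol m iv ≤ 4) ∧ (1 ≤ hcol m i'v ∧ hcol m i'v ≤ 4) ∧
    (1 ≤ vcol m iv jv ∧ vcol m iv jv ≤ 4) ∧ (1 ≤ vcol m iv j'v ∧ vcol m iv j'v ≤ 4) ∧
    hcol m iv ≠ hcol m i'v ∧ hcol m iv ≠ vcol m iv jv ∧ hcol m iv ≠ vcol m iv j'v ∧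
    hcol m i'v ≠ vcol m iv jv ∧ hcol m i'v ≠ vcol m iv j'v ∧ vcol m iv jv ≠ vcol m iv j'v := by
  unfold hcol vcol
  split_ifs <;> omega

lemma fin_sub_one_cases {m : ℕ} (i : Fin (m+3)) :
    (i.val = 0 ∧ ((i-1 : Fin (m+3))).val = (m+3) - 1) ∨ ((i-1 : Fin (m+3))).val + 1 = i.val := by
  have := i.isLt
  rw [fin_val_sub_one']
  split_ifs with h <;> omega

theorem torus_aux (m n : ℕ) (hne : (n+3) % 2 = 0) :
    HasIntervalColoring (cycleGraph (m+3) □ cycleGraph (n+3)) 4 := by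
  set G := cycleGraph (m+3) □ cycleGraph (n+3) with hG
  have main : ∀ (i : Fin (m+3)) (j : Fin (n+3)),
      (∀ w, G.Adj (i,j) w → 1 ≤ tc (m+3) (n+3) s((i,j),w) ∧ tc (m+3) (n+3) s((i,j),w) ≤ 4) ∧
      (∀ col, 1 ≤ col → col ≤ 4 → ∃ w, G.Adj (i,j) w ∧ tc (m+3) (n+3) s((i,j),w) = col) ∧
      (∀ w₁ w₂, G.Adj (i,j) w₁ → G.Adj (i,j) w₂ → w₁ ≠ w₂ →
        tc (m+3) (n+3) s((i,j),w₁) ≠ tc (m+3) (n+3) s((i,j),w₂)) := by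
    intro i j
    obtain ⟨⟨ha1, ha2⟩, ⟨hb1, hb2⟩, ⟨hu1, hu2⟩, ⟨hd1, hd2⟩, hab, hau, had, hbu, hbd, hud⟩ :=
      key_arith (m+3) (n+3) hne i.val ((i-1 : Fin (m+3))).val j.val ((j-1 : Fin (n+3))).val
        i.isLt (by omega) (by omega) j.isLt (fin_sub_one_cases i) (fin_sub_one_cases j)
    refine ⟨?_, ?_, ?_⟩
    · intro w hw
      rcases box_adj_iff'.mp hw with rfl | rfl | rfl | rfl <;>
        simp only [col_R, col_L, col_U, col_D] <;> omega
    · intro col h1 h4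
      have hcases : col = hcol (m+3) i.val ∨ col = hcol (m+3) ((i-1 : Fin (m+3))).val ∨
          col = vcol (m+3) i.val j.val ∨ col = vcol (m+3) i.val ((j-1 : Fin (n+3))).val := by
        omega
      rcases hcases with rfl | rfl | rfl | rfl
      · exact ⟨(i+1, j), box_adj_iff'.mpr (Or.inl rfl), col_R i j⟩
      · exact ⟨(i-1, j), box_adj_iff'.mpr (Or.inr (Or.inl rfl)), col_L i j⟩
      · exact ⟨(i, j+1), box_adj_iff'.mpr (Or.inr (Or.inr (Or.inl rfl))), col_U i j⟩
      · exact ⟨(i, j-1), box_adj_iff'.mpr (Or.inr (Or.inr (Or.inr rfl))), col_D i j⟩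
    · intro w₁ w₂ h1 h2 hne'
      rcases box_adj_iff'.mp h1 with rfl | rfl | rfl | rfl <;>
        rcases box_adj_iff'.mp h2 with rfl | rfl | rfl | rfl <;>
        first
          | exact absurd rfl hne'
          | (simp only [col_R, col_L, col_U, col_D]; omega)
  refine ⟨tc (m+3) (n+3), ?_, ?_, ?_, ?_⟩
  · intro e he
    induction e using Sym2.ind with
    | _ u v =>
      obtain ⟨i, j⟩ := u
      exact (main i j).1 v ((mem_edgeSet _).mp he)
  · intro col h1 h4
    obtain ⟨w, hw, hcw⟩ := (main 0 0).2.1 col h1 h4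
    exact ⟨s(((0 : Fin (m+3)), (0 : Fin (n+3))), w), (mem_edgeSet _).mpr hw, hcw⟩
  · intro v w₁ w₂ h1 h2 hne'
    obtain ⟨i, j⟩ := v
    exact (main i j).2.2 w₁ w₂ h1 h2 hne'
  · intro v ci cj ck hi hk hij hjk
    obtain ⟨i, j⟩ := v
    obtain ⟨w, hw, hcw⟩ := hi
    obtain ⟨w', hw', hcw'⟩ := hk
    have r1 := (main i j).1 w hw
    have r2 := (main i j).1 w' hw'
    exact (main i j).2.1 cj (by omega) (by omega)

lemma IntervalColorable.of_iso {α β : Type*} {G : SimpleGraph α} {H : SimpleGraph β}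
    (e : G ≃g H) (h : IntervalColorable G) : IntervalColorable H := by
  obtain ⟨t, ht, c, h1, h2, h3, h4⟩ := h
  have hmapback : ∀ ed : Sym2 β, (Sym2.map e (Sym2.map e.symm ed)) = ed := by
    intro ed
    induction ed using Sym2.ind with
    | _ u v => simp [Sym2.map_pair_eq]
  refine ⟨t, ht, fun ed => c (ed.map e.symm), ?_, ?_, ?_, ?_⟩
  · intro ed hed
    induction ed using Sym2.ind with
    | _ u v =>
      show 1 ≤ c (Sym2.map (⇑e.symm) s(u,v)) ∧ c (Sym2.map (⇑e.symm) s(u,v)) ≤ t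
      rw [Sym2.map_pair_eq]
      exact h1 _ ((mem_edgeSet _).mpr (e.symm.map_adj_iff.mpr ((mem_edgeSet _).mp hed)))
  · intro x hx1 hx2
    obtain ⟨ed, hed, hc⟩ := h2 x hx1 hx2
    refine ⟨ed.map e, ?_, ?_⟩
    · exact (Iso.map_mem_edgeSet_iff e).mpr hed
    · have heq : (ed.map e).map e.symm = ed := by
        induction ed using Sym2.ind with
        | _ u v => simp [Sym2.map_pair_eq]
      show c (Sym2.map (⇑e.symm) (Sym2.map (⇑e) ed)) = x
      rw [heq]; exact hc
  · intro v w₁ w₂ a1 a2 hne'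
    show c (s(v,w₁).map e.symm) ≠ c (s(v,w₂).map e.symm)
    rw [Sym2.map_pair_eq, Sym2.map_pair_eq]
    exact h3 (e.symm v) (e.symm w₁) (e.symm w₂) (e.symm.map_adj_iff.mpr a1)
      (e.symm.map_adj_iff.mpr a2) (fun hh => hne' (e.symm.injective hh))
  · intro v ci cj ck hi hk hij hjk
    have trans : ∀ x, (∃ w, H.Adj v w ∧ c (s(v,w).map e.symm) = x) ↔
        (∃ w, G.Adj (e.symm v) w ∧ c s(e.symm v, w) = x) := by
      intro x
      constructor
      · rintro ⟨w, hw, hcw⟩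
        refine ⟨e.symm w, e.symm.map_adj_iff.mpr hw, ?_⟩
        rw [← Sym2.map_pair_eq]; exact hcw
      · rintro ⟨w, hw, hcw⟩
        refine ⟨e w, ?_, ?_⟩
        · have h' := e.map_adj_iff.mpr hw
          simpa using h'
        · rw [Sym2.map_pair_eq, e.symm_apply_apply]
          exact hcw
    exact (trans cj).mpr (h4 (e.symm v) ci cj ck ((trans ci).mp hi) ((trans ck).mp hk) hij hjk)

theorem torus_neg (a b : ℕ) (hodd : ¬ Even ((a+3)*(b+3))) :
    ¬ IntervalColorable (cycleGraph (a+3) □ cycleGraph (b+3)) := by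
  rintro ⟨t, ht, c, hrange, hused, hproper, hinterval⟩
  set G := cycleGraph (a+3) □ cycleGraph (b+3) with hG
  have key : ∀ v : Fin (a+3) × Fin (b+3), ∃! w, G.Adj v w ∧ c s(v,w) % 4 = 0 := by
    rintro ⟨i, j⟩
    have adj1 : G.Adj (i,j) (i+1,j) := box_adj_iff'.mpr (Or.inl rfl)
    have adj2 : G.Adj (i,j) (i-1,j) := box_adj_iff'.mpr (Or.inr (Or.inl rfl))
    have adj3 : G.Adj (i,j) (i,j+1) := box_adj_iff'.mpr (Or.inr (Or.inr (Or.inl rfl)))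
    have adj4 : G.Adj (i,j) (i,j-1) := box_adj_iff'.mpr (Or.inr (Or.inr (Or.inr rfl)))
    set b1 := c s((i,j),(i+1,j)) with hb1
    set b2 := c s((i,j),(i-1,j)) with hb2
    set b3 := c s((i,j),(i,j+1)) with hb3
    set b4 := c s((i,j),(i,j-1)) with hb4
    have c12 : b1 ≠ b2 := hproper (i,j) _ _ adj1 adj2
      (fun h => fin_add_one_ne_sub_one' i (congrArg Prod.fst h))
    have c13 : b1 ≠ b3 := hproper (i,j) _ _ adj1 adj3
      (fun h => (fin_ne_add_one' i) (congrArg Prod.fst h).symm)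
    have c14 : b1 ≠ b4 := hproper (i,j) _ _ adj1 adj4
      (fun h => (fin_ne_add_one' i) (congrArg Prod.fst h).symm)
    have c23 : b2 ≠ b3 := hproper (i,j) _ _ adj2 adj3
      (fun h => (fin_ne_sub_one' i) (congrArg Prod.fst h).symm)
    have c24 : b2 ≠ b4 := hproper (i,j) _ _ adj2 adj4
      (fun h => (fin_ne_sub_one' i) (congrArg Prod.fst h).symm)
    have c34 : b3 ≠ b4 := hproper (i,j) _ _ adj3 adj4
      (fun h => fin_add_one_ne_sub_one' j (congrArg Prod.snd h))
    have hatt : ∀ w, G.Adj (i,j) w →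
        c s((i,j),w) = b1 ∨ c s((i,j),w) = b2 ∨ c s((i,j),w) = b3 ∨ c s((i,j),w) = b4 := by
      intro w hw
      rcases box_adj_iff'.mp hw with rfl | rfl | rfl | rfl
      exacts [Or.inl rfl, Or.inr (Or.inl rfl), Or.inr (Or.inr (Or.inl rfl)),
        Or.inr (Or.inr (Or.inr rfl))]
    set m0 := min (min b1 b2) (min b3 b4) with hm0
    set M0 := max (max b1 b2) (max b3 b4) with hM0
    have hminatt : ∃ w, G.Adj (i,j) w ∧ c s((i,j),w) = m0 := by
      have h : m0 = b1 ∨ m0 = b2 ∨ m0 = b3 ∨ m0 = b4 := by omega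
      rcases h with h | h | h | h
      exacts [⟨_, adj1, h.symm⟩, ⟨_, adj2, h.symm⟩, ⟨_, adj3, h.symm⟩, ⟨_, adj4, h.symm⟩]
    have hmaxatt : ∃ w, G.Adj (i,j) w ∧ c s((i,j),w) = M0 := by
      have h : M0 = b1 ∨ M0 = b2 ∨ M0 = b3 ∨ M0 = b4 := by omega
      rcases h with h | h | h | h
      exacts [⟨_, adj1, h.symm⟩, ⟨_, adj2, h.symm⟩, ⟨_, adj3, h.symm⟩, ⟨_, adj4, h.symm⟩]
    have hIcc : ∀ x, m0 ≤ x → x ≤ M0 → (x = b1 ∨ x = b2 ∨ x = b3 ∨ x = b4) := by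
      intro x hx1 hx2
      obtain ⟨w, hw, hcw⟩ := hinterval (i,j) m0 x M0 hminatt hmaxatt hx1 hx2
      rcases hatt w hw with h | h | h | h <;> omega
    have hwin : M0 ≤ m0 + 3 := by
      by_contra hcon
      have h0 := hIcc m0 (le_refl _) (by omega)
      have hh1 := hIcc (m0+1) (by omega) (by omega)
      have hh2 := hIcc (m0+2) (by omega) (by omega)
      have hh3 := hIcc (m0+3) (by omega) (by omega)
      have hh4 := hIcc (m0+4) (by omega) (by omega)
      omega
    obtain ⟨k, hk1, hk2, hk4⟩ : ∃ k, m0 ≤ k ∧ k ≤ M0 ∧ k % 4 = 0 :=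
      ⟨m0 + (4 - m0 % 4) % 4, by omega, by omega, by omega⟩
    have hwit : ∃ w, G.Adj (i,j) w ∧ c s((i,j),w) % 4 = 0 := by
      rcases hIcc k hk1 hk2 with h | h | h | h
      exacts [⟨_, adj1, by omega⟩, ⟨_, adj2, by omega⟩, ⟨_, adj3, by omega⟩, ⟨_, adj4, by omega⟩]
    obtain ⟨w, hw, hw4⟩ := hwit
    refine ⟨w, ⟨hw, hw4⟩, ?_⟩
    rintro y ⟨hy, hy4⟩
    have hcy := hatt y hy
    have hcw := hatt w hw
    have heq : c s((i,j),y) = c s((i,j),w) := by omega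
    by_contra hne2
    exact hproper (i,j) y w hy hw hne2 heq
  let M : Subgraph G :=
    { verts := Set.univ
      Adj := fun x y => G.Adj x y ∧ c s(x,y) % 4 = 0
      adj_sub := fun h => h.1
      edge_vert := fun _ => Set.mem_univ _
      symm := Std.Symm.mk <| fun x y h => ⟨h.1.symm, by rw [Sym2.eq_swap]; exact h.2⟩ }
  have hpm : M.IsPerfectMatching := ⟨fun v _ => key v, fun v => Set.mem_univ _⟩
  have heven := hpm.even_card
  rw [Fintype.card_prod, Fintype.card_fin, Fintype.card_fin] at heven
  exact hodd heven

end TorusAux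

/-- The torus `T(n₁,n₂) = C_{n₁} □ C_{n₂}` is interval colorable iff `n₁·n₂` is even. -/
theorem torus_interval_colorable (n₁ n₂ : ℕ) (h₁ : 3 ≤ n₁) (h₂ : 3 ≤ n₂) :
    (Even (n₁ * n₂) → IntervalColorable (SimpleGraph.cycleGraph n₁ □ SimpleGraph.cycleGraph n₂)) ∧
    (Odd (n₁ * n₂) → ¬ IntervalColorable (SimpleGraph.cycleGraph n₁ □ SimpleGraph.cycleGraph n₂)) := by
  obtain ⟨a, rfl⟩ : ∃ a, n₁ = a + 3 := ⟨n₁ - 3, by omega⟩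
  obtain ⟨b, rfl⟩ : ∃ b, n₂ = b + 3 := ⟨n₂ - 3, by omega⟩
  constructor
  · intro heven
    rcases Nat.even_mul.mp heven with he | he
    · have h := torus_aux b a (Nat.even_iff.mp he)
      exact IntervalColorable.of_iso
        (SimpleGraph.boxProdComm (SimpleGraph.cycleGraph (b+3)) (SimpleGraph.cycleGraph (a+3)))
        ⟨4, by norm_num, h⟩
    · exact ⟨4, by norm_num, torus_aux a b (Nat.even_iff.mp he)⟩
  · intro hodd
    exact torus_neg a b (Nat.not_even_iff_odd.mpr hodd)
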